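/- arXiv:2605.20903 — 3 statements merged into one kernel-verified Lean document; each statement's English description precedes it below -/
import Mathlib

section
/- The relation ⊲ is a partial order (reflexive, antisymmetric and transitive) on the set of fb-tableaux of size n. -/
open scoped Classical

namespace EsTam

/-- A cell `(i, j)`: `i` is the row index, `j` the column index. -/
abbrev Cell := ℕ × ℕ

/-- Membership in the staircase shape of size `n`: rows `1` and `2` consist of the
cells `(i, j)` with `1 ≤ j ≤ n`, and row `i` for `3 ≤ i ≤ n` consists of the cells
`(i, j)` with `i - 1 ≤ j ≤ n`. -/
def IsCell (n : ℕ) (c : Cell) : Prop :=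
  1 ≤ c.1 ∧ c.1 ≤ n ∧ 1 ≤ c.2 ∧ c.2 ≤ n ∧ (c.1 ≤ 2 ∨ c.1 - 1 ≤ c.2)

/-- The root cell `(1, n)`. -/
def root (n : ℕ) : Cell := (1, n)

/-- The border cells `(i, i - 1)` for `2 ≤ i ≤ n`. -/
def IsBorder (n : ℕ) (c : Cell) : Prop :=
  2 ≤ c.1 ∧ c.1 ≤ n ∧ c.2 = c.1 - 1

/-- An fb-tableau of size `n`: a set of cells of the staircase shape containing
the root and all border cells, and such that every cell other than the root has a
cell of the tableau strictly to its left in its row (same `i`, larger `j`) or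
strictly above it in its column (same `j`, smaller `i`). -/
structure FB (n : ℕ) where
  cells : Set Cell
  isCell_of_mem : ∀ c ∈ cells, IsCell n c
  root_mem : root n ∈ cells
  border_mem : ∀ c : Cell, IsBorder n c → c ∈ cells
  supported : ∀ c ∈ cells, c ≠ root n →
    (∃ j', c.2 < j' ∧ ((c.1, j') : Cell) ∈ cells) ∨
    (∃ i', i' < c.1 ∧ ((i', c.2) : Cell) ∈ cells)

variable {n : ℕ}

/-- `c` is a left-arrow of `T`: a cell of `T`, other than the root, with no cell of
`T` strictly to its left in its row. -/
def IsLeftArrow (T : FB n) (c : Cell) : Prop :=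
  c ∈ T.cells ∧ c ≠ root n ∧ ∀ j', c.2 < j' → ((c.1, j') : Cell) ∉ T.cells

/-- `c` is an up-arrow of `T`: a cell of `T`, other than the root, with no cell of
`T` strictly above it in its column. -/
def IsUpArrow (T : FB n) (c : Cell) : Prop :=
  c ∈ T.cells ∧ c ≠ root n ∧ ∀ i', i' < c.1 → ((i', c.2) : Cell) ∉ T.cells

/-- The row space of `T`: cells lying, in their row, weakly to the right of the
root or of a left-arrow of `T`. -/
def RowSp (T : FB n) : Set Cell :=
  {c | IsCell n c ∧ ∃ j', c.2 ≤ j' ∧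
    (((c.1, j') : Cell) = root n ∨ IsLeftArrow T (c.1, j'))}

/-- The column space of `T`: cells lying, in their column, weakly below the root or
an up-arrow of `T`. -/
def ColSp (T : FB n) : Set Cell :=
  {c | IsCell n c ∧ ∃ i', i' ≤ c.1 ∧
    (((i', c.2) : Cell) = root n ∨ IsUpArrow T (i', c.2))}

/-- `c` is a free cell of `T`: it lies strictly below the up-arrow of `T` in its
column and strictly to the right of the left-arrow of `T` in its row. -/
def IsFree (T : FB n) (c : Cell) : Prop :=
  IsCell n c ∧ (∃ i', i' < c.1 ∧ IsUpArrow T (i', c.2)) ∧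
    (∃ j', c.2 < j' ∧ IsLeftArrow T (c.1, j'))

/-- The relation `S ⊲ T` on fb-tableaux of size `n`. -/
def Lhd (S T : FB n) : Prop :=
  ColSp S ⊆ ColSp T ∧ RowSp T ⊆ RowSp S ∧
    ∀ c : Cell, IsFree S c → IsFree T c → c ∈ S.cells → c ∈ T.cells

/-- `T` covers `S` in `esTam n`. -/
def CovRel (S T : FB n) : Prop :=
  Lhd S T ∧ S ≠ T ∧ ∀ U : FB n, Lhd S U → Lhd U T → U = S ∨ U = T

/-- `m` is the greatest lower bound of `x` and `y` in `esTam n`. -/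
def IsMeet (x y m : FB n) : Prop :=
  Lhd m x ∧ Lhd m y ∧ ∀ t : FB n, Lhd t x → Lhd t y → Lhd t m

/-- `j` is the least upper bound of `x` and `y` in `esTam n`. -/
def IsJoin (x y j : FB n) : Prop :=
  Lhd x j ∧ Lhd y j ∧ ∀ t : FB n, Lhd x t → Lhd y t → Lhd j t

/-- `T` is join-irreducible: it covers exactly one element. -/
def JoinIrr (T : FB n) : Prop := ∃! S : FB n, CovRel S T

/-- `T` is meet-irreducible: it is covered by exactly one element. -/
def MeetIrr (T : FB n) : Prop := ∃! S : FB n, CovRel T S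

/-- A strict chain `f 0 ⊲ f 1 ⊲ ⋯ ⊲ f m` of length `m`. -/
def IsStrictChain {m : ℕ} (f : Fin (m + 1) → FB n) : Prop :=
  ∀ i j : Fin (m + 1), i < j → Lhd (f i) (f j) ∧ f i ≠ f j

/-- `T` is small: every cell of `T` other than the root is an arrow. -/
def IsSmall (T : FB n) : Prop :=
  ∀ c ∈ T.cells, c ≠ root n → IsLeftArrow T c ∨ IsUpArrow T c

/-- `T` is binary: `T` has no free cells. -/
def IsBinary (T : FB n) : Prop := ∀ c : Cell, ¬ IsFree T c

/-- `c` lies strictly above the up-arrow of `T` in its column. -/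
def PointedUp (T : FB n) (c : Cell) : Prop :=
  ∃ i', c.1 < i' ∧ IsUpArrow T (i', c.2)

/-- `c` is pointed by a left-arrow of `T`: it lies strictly to the left of the
left-arrow of `T` in its row. -/
def PointedLeft (T : FB n) (c : Cell) : Prop :=
  ∃ j', j' < c.2 ∧ IsLeftArrow T (c.1, j')

end EsTam

namespace EsTam

variable {n : ℕ}

lemma FB.ext' {S T : FB n} (h : S.cells = T.cells) : S = T := by
  cases S; cases T; cases h; rfl

lemma ua_unique {T : FB n} {a b j : ℕ} (ha : IsUpArrow T (a, j)) (hb : IsUpArrow T (b, j)) :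
    a = b := by
  rcases lt_trichotomy a b with h | h | h
  · exact absurd ha.1 (hb.2.2 a h)
  · exact h
  · exact absurd hb.1 (ha.2.2 b h)

lemma la_unique {T : FB n} {i a b : ℕ} (ha : IsLeftArrow T (i, a)) (hb : IsLeftArrow T (i, b)) :
    a = b := by
  rcases lt_trichotomy a b with h | h | h
  · exact absurd hb.1 (ha.2.2 b h)
  · exact h
  · exact absurd ha.1 (hb.2.2 a h)

lemma ua_col_ne {T : FB n} {c : Cell} (h : IsUpArrow T c) : c.2 ≠ n := by
  intro hc
  have hcell := T.isCell_of_mem c h.1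
  rcases Nat.lt_or_ge 1 c.1 with h1 | h1
  · exact h.2.2 1 h1 (by rw [hc]; exact T.root_mem)
  · exact h.2.1 (Prod.ext (le_antisymm h1 hcell.1) hc)

lemma la_row_ne {T : FB n} {c : Cell} (h : IsLeftArrow T c) : c.1 ≠ 1 := by
  intro hc
  have hcell := T.isCell_of_mem c h.1
  have h2n : c.2 ≠ n := fun hn => h.2.1 (Prod.ext hc hn)
  have : c.2 < n := lt_of_le_of_ne hcell.2.2.2.1 h2n
  exact h.2.2 n this (by rw [hc]; exact T.root_mem)

lemma ua_transfer {S T : FB n} (h : ColSp S ⊆ ColSp T) {s j : ℕ}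
    (hs : IsUpArrow S (s, j)) : ∃ t ≤ s, IsUpArrow T (t, j) := by
  have hmem : ((s, j) : Cell) ∈ ColSp S :=
    ⟨S.isCell_of_mem _ hs.1, s, le_refl s, Or.inr hs⟩
  obtain ⟨hc, t, ht, hrt⟩ := h hmem
  rcases hrt with hr | hu
  · exact absurd (show j = n from congrArg Prod.snd hr) (ua_col_ne hs)
  · exact ⟨t, ht, hu⟩

lemma la_transfer {S T : FB n} (h : RowSp S ⊆ RowSp T) {i j : ℕ}
    (hs : IsLeftArrow S (i, j)) : ∃ j', j ≤ j' ∧ IsLeftArrow T (i, j') := by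
  have hmem : ((i, j) : Cell) ∈ RowSp S :=
    ⟨S.isCell_of_mem _ hs.1, j, le_refl j, Or.inr hs⟩
  obtain ⟨hc, j', hj', hrt⟩ := h hmem
  rcases hrt with hr | hl
  · exact absurd (show i = 1 from congrArg Prod.fst hr) (la_row_ne hs)
  · exact ⟨j', hj', hl⟩

lemma ua_iff {S T : FB n} (h1 : ColSp S ⊆ ColSp T) (h2 : ColSp T ⊆ ColSp S)
    {c : Cell} : IsUpArrow S c ↔ IsUpArrow T c := by
  have key : ∀ (A B : FB n), ColSp A ⊆ ColSp B → ColSp B ⊆ ColSp A →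
      ∀ c : Cell, IsUpArrow A c → IsUpArrow B c := by
    intro A B hAB hBA c hA
    obtain ⟨t, ht, hB⟩ := ua_transfer hAB (show IsUpArrow A (c.1, c.2) from hA)
    obtain ⟨s, hs, hA'⟩ := ua_transfer hBA hB
    have h1 : s = c.1 := ua_unique hA' hA
    have h2 : t = c.1 := le_antisymm ht (h1 ▸ hs)
    rw [h2] at hB
    exact hB
  exact ⟨key S T h1 h2 c, key T S h2 h1 c⟩

lemma la_iff {S T : FB n} (h1 : RowSp S ⊆ RowSp T) (h2 : RowSp T ⊆ RowSp S)
    {c : Cell} : IsLeftArrow S c ↔ IsLeftArrow T c := by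
  have key : ∀ (A B : FB n), RowSp A ⊆ RowSp B → RowSp B ⊆ RowSp A →
      ∀ c : Cell, IsLeftArrow A c → IsLeftArrow B c := by
    intro A B hAB hBA c hA
    obtain ⟨t, ht, hB⟩ := la_transfer hAB (show IsLeftArrow A (c.1, c.2) from hA)
    obtain ⟨s, hs, hA'⟩ := la_transfer hBA hB
    have h1 : s = c.2 := la_unique hA' hA
    have h2 : t = c.2 := le_antisymm (h1 ▸ hs) ht
    rw [h2] at hB
    exact hB
  exact ⟨key S T h1 h2 c, key T S h2 h1 c⟩

lemma free_of_nonarrow {T : FB n} {c : Cell} (hc : c ∈ T.cells) (hr : c ≠ root n)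
    (hla : ¬ IsLeftArrow T c) (hua : ¬ IsUpArrow T c) : IsFree T c := by
  have hcell := T.isCell_of_mem c hc
  have hL : ∃ j', c.2 < j' ∧ ((c.1, j') : Cell) ∈ T.cells := by
    by_contra h
    push_neg at h
    exact hla ⟨hc, hr, fun j' hj' => h j' hj'⟩
  have hU : ∃ i', i' < c.1 ∧ ((i', c.2) : Cell) ∈ T.cells := by
    by_contra h
    push_neg at h
    exact hua ⟨hc, hr, fun i' hi' => h i' hi'⟩
  obtain ⟨j0, hj0, hm0⟩ := hL
  obtain ⟨i0, hi0, hm0'⟩ := hU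
  have hj0n : j0 ≤ n := (T.isCell_of_mem _ hm0).2.2.2.1
  have hi01 : 1 ≤ i0 := (T.isCell_of_mem _ hm0').1
  have hc1 : 2 ≤ c.1 := lt_of_le_of_lt hi01 hi0
  have hc2 : c.2 < n := lt_of_lt_of_le hj0 hj0n
  -- left arrow: greatest j with (c.1, j) ∈ T
  set P : ℕ → Prop := fun j => ((c.1, j) : Cell) ∈ T.cells with hP
  have hPg : P (Nat.findGreatest P n) := Nat.findGreatest_spec hj0n hm0
  have hjle : j0 ≤ Nat.findGreatest P n := Nat.le_findGreatest hj0n hm0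
  have hLA : IsLeftArrow T (c.1, Nat.findGreatest P n) := by
    refine ⟨hPg, ?_, ?_⟩
    · intro heq
      have : c.1 = 1 := congrArg Prod.fst heq
      omega
    · intro j' hj' hmem
      have : j' ≤ n := (T.isCell_of_mem _ hmem).2.2.2.1
      have : j' ≤ Nat.findGreatest P n := Nat.le_findGreatest this hmem
      omega
  -- up arrow: least i with (i, c.2) ∈ T
  have hex : ∃ i, ((i, c.2) : Cell) ∈ T.cells := ⟨i0, hm0'⟩
  have hUA : IsUpArrow T (Nat.find hex, c.2) := by
    refine ⟨Nat.find_spec hex, ?_, ?_⟩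
    · intro heq
      have : c.2 = n := congrArg Prod.snd heq
      omega
    · intro i' hi' hmem
      exact Nat.find_min hex hi' hmem
  refine ⟨hcell, ⟨Nat.find hex, ?_, hUA⟩, ⟨Nat.findGreatest P n, ?_, hLA⟩⟩
  · exact lt_of_le_of_lt (Nat.find_min' hex hm0') hi0
  · omega

lemma free_iff {S T : FB n} (hc1 : ColSp S ⊆ ColSp T) (hc2 : ColSp T ⊆ ColSp S)
    (hr1 : RowSp S ⊆ RowSp T) (hr2 : RowSp T ⊆ RowSp S) {c : Cell} :
    IsFree S c ↔ IsFree T c := by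
  constructor <;> rintro ⟨hcell, ⟨i', hi', hu⟩, ⟨j', hj', hl⟩⟩
  · exact ⟨hcell, ⟨i', hi', (ua_iff hc1 hc2).mp hu⟩, ⟨j', hj', (la_iff hr1 hr2).mp hl⟩⟩
  · exact ⟨hcell, ⟨i', hi', (ua_iff hc1 hc2).mpr hu⟩, ⟨j', hj', (la_iff hr1 hr2).mpr hl⟩⟩

lemma lhd_cells_subset {S T : FB n} (hST : Lhd S T) (hTS : Lhd T S) :
    S.cells ⊆ T.cells := by
  intro c hc
  by_cases hr : c = root n
  · rw [hr]; exact T.root_mem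
  by_cases hla : IsLeftArrow S c
  · exact ((la_iff hTS.2.1 hST.2.1).mp hla).1
  by_cases hua : IsUpArrow S c
  · exact ((ua_iff hST.1 hTS.1).mp hua).1
  have hfS : IsFree S c := free_of_nonarrow hc hr hla hua
  have hfT : IsFree T c := (free_iff hST.1 hTS.1 hTS.2.1 hST.2.1).mp hfS
  exact hST.2.2 c hfS hfT hc

/-- the relation `⊲` is a partial order (reflexive, antisymmetric and
transitive) on the set of fb-tableaux of size `n`. -/
theorem lhd_isPartialOrder (n : ℕ) (hn : 1 ≤ n) :
    (∀ T : FB n, Lhd T T) ∧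
    (∀ S T : FB n, Lhd S T → Lhd T S → S = T) ∧
    (∀ S T U : FB n, Lhd S T → Lhd T U → Lhd S U) := by
  refine ⟨fun T => ⟨subset_rfl, subset_rfl, fun c _ _ hc => hc⟩, ?_, ?_⟩
  · intro S T hST hTS
    exact FB.ext' (Set.Subset.antisymm (lhd_cells_subset hST hTS) (lhd_cells_subset hTS hST))
  · intro S T U hST hTU
    refine ⟨hST.1.trans hTU.1, hTU.2.1.trans hST.2.1, ?_⟩
    intro c hfS hfU hcS
    have hfT : IsFree T c := by
      obtain ⟨hcell, ⟨i', hi', huS⟩, _⟩ := hfS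
      obtain ⟨_, _, ⟨j', hj', hlU⟩⟩ := hfU
      obtain ⟨t, ht, huT⟩ := ua_transfer hST.1 huS
      obtain ⟨j'', hj'', hlT⟩ := la_transfer hTU.2.1 hlU
      exact ⟨hcell, ⟨t, lt_of_le_of_lt ht hi', huT⟩, ⟨j'', lt_of_lt_of_le hj' hj'', hlT⟩⟩
    exact hTU.2.2 c hfT hfU (hST.2.2 c hfS hfT hcS)

end EsTam
end

section
/- For every fb-tableau T of size n, the conjugate T' is again an fb-tableau of size n, the map T ↦ T' is an involution on the set of fb-tableaux of size n, and for all fb-tableaux S, T of size n one has S ⊲ T if and only if T' ⊲ S'. In particular, esTam_n is self-dual. -/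
open scoped Classical

namespace EsTam

/-- The set of cells of the conjugate of `T`: the cells `(n+1-j, n+1-i)` such that
either `(i,j) ∈ T` and `(i,j)` is not a free cell of `T` other than a border cell,
or `(i,j) ∉ T` and `(i,j)` is a free cell of `T` that is not a border cell. -/
def conjCells (n : ℕ) (T : FB n) : Set Cell :=
  {c | ∃ i j : ℕ, c = (n + 1 - j, n + 1 - i) ∧
    ((((i, j) : Cell) ∈ T.cells ∧ ¬(IsFree T (i, j) ∧ ¬ IsBorder n (i, j))) ∨
     (((i, j) : Cell) ∉ T.cells ∧ IsFree T (i, j) ∧ ¬ IsBorder n (i, j)))}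


/-! ### Auxiliary development for the conjugation theorem -/

section Aux

variable {n : ℕ}

/-- Conjugation map on cells. -/
def conj (n : ℕ) (c : Cell) : Cell := (n + 1 - c.2, n + 1 - c.1)

lemma conj_isCell {c : Cell} (h : IsCell n c) : IsCell n (conj n c) := by
  obtain ⟨a, b⟩ := c
  simp only [IsCell, conj] at *
  omega

lemma conj_conj {c : Cell} (h : IsCell n c) : conj n (conj n c) = c := by
  obtain ⟨a, b⟩ := c
  simp only [IsCell, conj, Prod.mk.injEq] at *
  omega

lemma conj_root : conj n (root n) = root n := by
  simp only [conj, root, Prod.mk.injEq]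
  omega

lemma conj_inj {c d : Cell} (hc : IsCell n c) (hd : IsCell n d)
    (h : conj n c = conj n d) : c = d := by
  rw [← conj_conj hc, h, conj_conj hd]

lemma IsBorder.isCell {c : Cell} (h : IsBorder n c) : IsCell n c := by
  obtain ⟨a, b⟩ := c
  simp only [IsBorder, IsCell] at *
  omega

lemma root_isCell (hn : 1 ≤ n) : IsCell n (root n) := by
  simp only [IsCell, root]
  omega

lemma conj_border {c : Cell} (h : IsBorder n c) : IsBorder n (conj n c) := by
  obtain ⟨a, b⟩ := c
  simp only [IsBorder, conj] at *
  omega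

lemma FB.one_le (T : FB n) : 1 ≤ n := by
  have h := T.isCell_of_mem _ T.root_mem
  exact h.2.2.2.1.trans' h.2.2.1

lemma leftArrow_unique {T : FB n} {i j j' : ℕ} (hc : IsLeftArrow T (i, j))
    (hd : IsLeftArrow T (i, j')) : j = j' := by
  rcases lt_trichotomy j j' with h | h | h
  · exact absurd hd.1 (hc.2.2 j' h)
  · exact h
  · exact absurd hc.1 (hd.2.2 j h)

lemma upArrow_unique {T : FB n} {i i' j : ℕ} (hc : IsUpArrow T (i, j))
    (hd : IsUpArrow T (i', j)) : i = i' := by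
  rcases lt_trichotomy i i' with h | h | h
  · exact absurd hc.1 (hd.2.2 i h)
  · exact h
  · exact absurd hd.1 (hc.2.2 i' h)

lemma not_leftArrow_row_one {T : FB n} {j : ℕ} : ¬ IsLeftArrow T (1, j) := by
  rintro ⟨hmem, hroot, harr⟩
  have hcell := T.isCell_of_mem _ hmem
  have hjn : j < n := by
    rcases lt_or_eq_of_le hcell.2.2.2.1 with h | h
    · exact h
    · exact absurd (Prod.ext rfl h : ((1, j) : Cell) = root n) hroot
  exact harr n hjn T.root_mem

lemma not_upArrow_col_n {T : FB n} {i : ℕ} : ¬ IsUpArrow T (i, n) := by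
  rintro ⟨hmem, hroot, harr⟩
  have h1 : 1 ≤ i := (T.isCell_of_mem _ hmem).1
  rcases lt_or_eq_of_le h1 with h | h
  · exact harr 1 h T.root_mem
  · exact hroot (Prod.ext h.symm rfl)

lemma leftArrow_exists (T : FB n) {i : ℕ} (h2 : 2 ≤ i) (hin : i ≤ n) :
    ∃ j, IsLeftArrow T (i, j) := by
  classical
  set P : ℕ → Prop := fun j => ((i, j) : Cell) ∈ T.cells with hP
  have hb : P (i - 1) := T.border_mem (i, i - 1) ⟨h2, hin, rfl⟩
  have hb' : i - 1 ≤ n := by omega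
  refine ⟨Nat.findGreatest P n, Nat.findGreatest_spec hb' hb, ?_, ?_⟩
  · intro h
    have : i = 1 := congrArg Prod.fst h
    omega
  · intro j' hj' hmem
    by_cases hj'n : j' ≤ n
    · exact Nat.findGreatest_is_greatest hj' hj'n hmem
    · exact hj'n (T.isCell_of_mem _ hmem).2.2.2.1

lemma upArrow_exists (T : FB n) {j : ℕ} (h1 : 1 ≤ j) (hjn : j < n) :
    ∃ i, IsUpArrow T (i, j) := by
  classical
  have hex : ∃ i, ((i, j) : Cell) ∈ T.cells :=
    ⟨j + 1, T.border_mem (j + 1, j) ⟨by omega, by omega, by omega⟩⟩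
  refine ⟨Nat.find hex, Nat.find_spec hex, ?_, fun i' hi' => Nat.find_min hex hi'⟩
  intro h
  have : j = n := congrArg Prod.snd h
  omega

lemma not_both {T : FB n} {c : Cell} (hl : IsLeftArrow T c) (hu : IsUpArrow T c) :
    False := by
  rcases T.supported c hl.1 hl.2.1 with ⟨j', hj, hm⟩ | ⟨i', hi, hm⟩
  · exact hl.2.2 j' hj hm
  · exact hu.2.2 i' hi hm

lemma leftArrow_not_free {T : FB n} {c : Cell} (hl : IsLeftArrow T c) :
    ¬ IsFree T c := by
  rintro ⟨-, -, j', hj, hl'⟩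
  exact hl.2.2 j' hj hl'.1

lemma upArrow_not_free {T : FB n} {c : Cell} (hu : IsUpArrow T c) :
    ¬ IsFree T c := by
  rintro ⟨-, ⟨i', hi, hu'⟩, -⟩
  exact hu.2.2 i' hi hu'.1

lemma root_not_free {T : FB n} : ¬ IsFree T (root n) := by
  rintro ⟨-, -, j', hj, hl⟩
  exact not_leftArrow_row_one hl

/-- The predicate describing which cells `c` contribute `conj n c` to the
conjugate tableau. -/
def Q (T : FB n) (c : Cell) : Prop :=
  (c ∈ T.cells ∧ ¬(IsFree T c ∧ ¬ IsBorder n c)) ∨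
  (c ∉ T.cells ∧ (IsFree T c ∧ ¬ IsBorder n c))

lemma Q.isCell {T : FB n} {c : Cell} (h : Q T c) : IsCell n c := by
  rcases h with ⟨h, -⟩ | ⟨-, h, -⟩
  · exact T.isCell_of_mem _ h
  · exact h.1

lemma Q_root (T : FB n) : Q T (root n) :=
  Or.inl ⟨T.root_mem, fun h => root_not_free h.1⟩

lemma Q_leftArrow {T : FB n} {c : Cell} (h : IsLeftArrow T c) : Q T c :=
  Or.inl ⟨h.1, fun hf => leftArrow_not_free h hf.1⟩

lemma Q_upArrow {T : FB n} {c : Cell} (h : IsUpArrow T c) : Q T c :=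
  Or.inl ⟨h.1, fun hf => upArrow_not_free h hf.1⟩

lemma mem_conjCells {T : FB n} {d : Cell} :
    d ∈ conjCells n T ↔ ∃ c, IsCell n c ∧ d = conj n c ∧ Q T c := by
  constructor
  · rintro ⟨i, j, hd, hq⟩
    exact ⟨(i, j), Q.isCell hq, hd, hq⟩
  · rintro ⟨c, hc, hd, hq⟩
    exact ⟨c.1, c.2, hd, hq⟩

lemma mem_conjCells_conj {T : FB n} {c : Cell} (hc : IsCell n c) :
    conj n c ∈ conjCells n T ↔ Q T c := by
  rw [mem_conjCells]
  constructor
  · rintro ⟨e, he, heq, hq⟩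
    rwa [conj_inj hc he heq]
  · intro hq
    exact ⟨c, hc, rfl, hq⟩

end Aux

section ConjFB

variable {n : ℕ}

/-- The conjugate fb-tableau. -/
def conjFB (n : ℕ) (T : FB n) : FB n where
  cells := conjCells n T
  isCell_of_mem := by
    intro d hd
    obtain ⟨c, hc, rfl, -⟩ := mem_conjCells.1 hd
    exact conj_isCell hc
  root_mem := by
    exact mem_conjCells.2 ⟨root n, root_isCell T.one_le, conj_root.symm, Q_root T⟩
  border_mem := by
    intro c hc
    exact mem_conjCells.2 ⟨conj n c, (conj_border hc).isCell,
      (conj_conj hc.isCell).symm,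
      Or.inl ⟨T.border_mem _ (conj_border hc), fun h => h.2 (conj_border hc)⟩⟩
  supported := by
    intro d hd hdroot
    by_contra hcon
    push_neg at hcon
    obtain ⟨hcon1, hcon2⟩ := hcon
    obtain ⟨c, hc, rfl, hq⟩ := mem_conjCells.1 hd
    obtain ⟨i, j⟩ := c
    have hn : 1 ≤ n := T.one_le
    have hi1 : 1 ≤ i := hc.1
    have hin : i ≤ n := hc.2.1
    have hj1 : 1 ≤ j := hc.2.2.1
    have hjn : j ≤ n := hc.2.2.2.1
    have hcroot : ((i, j) : Cell) ≠ root n := fun h => hdroot (by rw [h, conj_root])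
    -- translate the two "no dot" hypotheses back to `T`-coordinates
    have hA : ∀ i'', i'' < i → IsCell n (i'', j) → ¬ Q T (i'', j) := by
      intro i'' hlt hcell hq'
      refine hcon1 (n + 1 - i'') ?_ ((mem_conjCells_conj hcell).2 hq')
      show (conj n ((i, j) : Cell)).2 < n + 1 - i''
      show n + 1 - i < n + 1 - i''
      omega
    have hB : ∀ j'', j < j'' → IsCell n (i, j'') → ¬ Q T (i, j'') := by
      intro j'' hlt hcell hq'
      refine hcon2 (n + 1 - j'') ?_ ((mem_conjCells_conj hcell).2 hq')
      show n + 1 - j'' < (conj n ((i, j) : Cell)).1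
      show n + 1 - j'' < n + 1 - j
      have : j'' ≤ n := hcell.2.2.2.1
      omega
    -- rule out row 1 and column n
    by_cases hi : i = 1
    · subst hi
      have hjn' : j < n := by
        rcases lt_or_eq_of_le hjn with h | h
        · exact h
        · exact absurd (Prod.ext rfl h : ((1, j) : Cell) = root n) hcroot
      exact hB n hjn' (root_isCell hn) (Q_root T)
    · by_cases hj : j = n
      · subst hj
        exact hA 1 (by omega) (root_isCell hn) (Q_root T)
      · have hi2 : 2 ≤ i := by omega
        have hjn' : j < n := by omega
        obtain ⟨U, hU⟩ := upArrow_exists T hj1 hjn'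
        obtain ⟨L, hL⟩ := leftArrow_exists T hi2 hin
        have hUge : i ≤ U := by
          by_contra h'
          exact hA U (by omega) (T.isCell_of_mem _ hU.1) (Q_upArrow hU)
        have hLle : L ≤ j := by
          by_contra h'
          exact hB L (by omega) (T.isCell_of_mem _ hL.1) (Q_leftArrow hL)
        rcases hq with ⟨hmem, -⟩ | ⟨-, hfree, -⟩
        · have h1 : ¬ i < U := fun h => hU.2.2 i h hmem
          have h2 : ¬ L < j := fun h => hL.2.2 j h hmem
          have hUi : U = i := by omega
          have hLj : L = j := by omega
          rw [hUi] at hU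
          rw [hLj] at hL
          exact not_both hL hU
        · obtain ⟨-, ⟨i₀, hi₀, hu₀⟩, -⟩ := hfree
          have := upArrow_unique hu₀ hU
          omega

lemma conjFB_cells (n : ℕ) (T : FB n) : (conjFB n T).cells = conjCells n T := rfl

end ConjFB

section Arrows

variable {n : ℕ}

lemma isUpArrow_conj {T : FB n} {c : Cell} (h : IsLeftArrow T c) :
    IsUpArrow (conjFB n T) (conj n c) := by
  obtain ⟨i, j⟩ := c
  have hcell : IsCell n (i, j) := T.isCell_of_mem _ h.1
  have hi2 : 2 ≤ i := by
    have h1 : 1 ≤ i := hcell.1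
    by_contra h'
    have he1 : i = 1 := by omega
    subst he1
    exact not_leftArrow_row_one h
  refine ⟨(mem_conjCells_conj hcell).2 (Q_leftArrow h), ?_, ?_⟩
  · intro he
    have : ((i, j) : Cell) = root n :=
      conj_inj hcell (root_isCell T.one_le) (by rw [he, conj_root])
    have : i = 1 := congrArg Prod.fst this
    omega
  · intro i' hi' hmem
    obtain ⟨e, he, heq, hq⟩ := mem_conjCells.1 hmem
    obtain ⟨a, b⟩ := e
    have h1 : i' = n + 1 - b := congrArg Prod.fst heq
    have h2 : n + 1 - i = n + 1 - a := congrArg Prod.snd heq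
    have hi'' : i' < n + 1 - j := hi'
    have ha : a = i := by
      have := he.1
      have := he.2.1
      omega
    have hb : j < b := by
      have := he.2.2.2.1
      omega
    subst ha
    rcases hq with ⟨hm, -⟩ | ⟨-, hf, -⟩
    · exact h.2.2 b hb hm
    · obtain ⟨-, -, ⟨b₀, hb₀, hl₀⟩⟩ := hf
      have := leftArrow_unique hl₀ h
      omega

lemma isLeftArrow_conj {T : FB n} {c : Cell} (h : IsUpArrow T c) :
    IsLeftArrow (conjFB n T) (conj n c) := by
  obtain ⟨i, j⟩ := c
  have hcell : IsCell n (i, j) := T.isCell_of_mem _ h.1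
  have hjn : j < n := by
    have h1 : j ≤ n := hcell.2.2.2.1
    rcases lt_or_eq_of_le h1 with h' | h'
    · exact h'
    · subst h'
      exact absurd h not_upArrow_col_n
  refine ⟨(mem_conjCells_conj hcell).2 (Q_upArrow h), ?_, ?_⟩
  · intro he
    have : ((i, j) : Cell) = root n :=
      conj_inj hcell (root_isCell T.one_le) (by rw [he, conj_root])
    have : j = n := congrArg Prod.snd this
    omega
  · intro j' hj' hmem
    obtain ⟨e, he, heq, hq⟩ := mem_conjCells.1 hmem
    obtain ⟨a, b⟩ := e
    have h1 : n + 1 - j = n + 1 - b := congrArg Prod.fst heq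
    have h2 : j' = n + 1 - a := congrArg Prod.snd heq
    have hj'' : n + 1 - i < j' := hj'
    have hb : b = j := by
      have := he.2.2.1
      have := he.2.2.2.1
      have := hcell.2.2.2.1
      omega
    have ha : a < i := by
      have := he.1
      have := hcell.2.1
      omega
    subst hb
    rcases hq with ⟨hm, -⟩ | ⟨-, hf, -⟩
    · exact h.2.2 a ha hm
    · obtain ⟨-, ⟨a₀, ha₀, hu₀⟩, -⟩ := hf
      have := upArrow_unique hu₀ h
      omega

lemma upArrow_unique' {T : FB n} {c d : Cell} (hc : IsUpArrow T c)
    (hd : IsUpArrow T d) (h : c.2 = d.2) : c = d := by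
  obtain ⟨a, b⟩ := c
  obtain ⟨a', b'⟩ := d
  have hb : b = b' := h
  subst hb
  have := upArrow_unique hc hd
  simp [this]

lemma leftArrow_unique' {T : FB n} {c d : Cell} (hc : IsLeftArrow T c)
    (hd : IsLeftArrow T d) (h : c.1 = d.1) : c = d := by
  obtain ⟨a, b⟩ := c
  obtain ⟨a', b'⟩ := d
  have ha : a = a' := h
  subst ha
  have := leftArrow_unique hc hd
  simp [this]

lemma upArrow_conjFB_eq {T : FB n} {d : Cell} (h : IsUpArrow (conjFB n T) d) :
    ∃ c, IsLeftArrow T c ∧ d = conj n c := by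
  have hd : IsCell n d := (conjFB n T).isCell_of_mem _ h.1
  obtain ⟨a, b⟩ := d
  have hbn : b < n := by
    have h1 : b ≤ n := hd.2.2.2.1
    rcases lt_or_eq_of_le h1 with h' | h'
    · exact h'
    · subst h'
      exact absurd h not_upArrow_col_n
  have hi2 : 2 ≤ n + 1 - b := by have := hd.2.2.1; omega
  have hin : n + 1 - b ≤ n := by have := hd.2.2.1; omega
  obtain ⟨J, hJ⟩ := leftArrow_exists T hi2 hin
  have harr := isUpArrow_conj hJ
  refine ⟨(n + 1 - b, J), hJ, upArrow_unique' h harr ?_⟩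
  show b = (conj n ((n + 1 - b, J) : Cell)).2
  show b = n + 1 - (n + 1 - b)
  have := hd.2.2.1
  omega

lemma leftArrow_conjFB_eq {T : FB n} {d : Cell} (h : IsLeftArrow (conjFB n T) d) :
    ∃ c, IsUpArrow T c ∧ d = conj n c := by
  have hd : IsCell n d := (conjFB n T).isCell_of_mem _ h.1
  obtain ⟨a, b⟩ := d
  have han : 2 ≤ a := by
    have h1 : 1 ≤ a := hd.1
    by_contra h'
    have he1 : a = 1 := by omega
    subst he1
    exact not_leftArrow_row_one h
  have hj1 : 1 ≤ n + 1 - a := by have := hd.2.1; omega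
  have hjn : n + 1 - a < n := by have := hd.2.1; omega
  obtain ⟨I, hI⟩ := upArrow_exists T hj1 hjn
  have harr := isLeftArrow_conj hI
  refine ⟨(I, n + 1 - a), hI, leftArrow_unique' h harr ?_⟩
  show a = (conj n ((I, n + 1 - a) : Cell)).1
  show a = n + 1 - (n + 1 - a)
  have := hd.2.1
  omega

lemma isBorder_conj_iff {c : Cell} (hc : IsCell n c) :
    IsBorder n (conj n c) ↔ IsBorder n c :=
  ⟨fun h => by have := conj_border h; rwa [conj_conj hc] at this, conj_border⟩

lemma isFree_conj {T : FB n} {c : Cell} (hc : IsCell n c) :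
    IsFree (conjFB n T) (conj n c) ↔ IsFree T c := by
  obtain ⟨i, j⟩ := c
  have hi1 : 1 ≤ i := hc.1
  have hin : i ≤ n := hc.2.1
  have hj1 : 1 ≤ j := hc.2.2.1
  have hjn : j ≤ n := hc.2.2.2.1
  constructor
  · rintro ⟨-, ⟨a, ha, hu⟩, ⟨b, hb, hl⟩⟩
    obtain ⟨⟨i₂, J⟩, hJ, heq⟩ := upArrow_conjFB_eq hu
    obtain ⟨⟨I, j₂⟩, hI, heq'⟩ := leftArrow_conjFB_eq hl
    have hJc : IsCell n (i₂, J) := T.isCell_of_mem _ hJ.1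
    have hIc : IsCell n (I, j₂) := T.isCell_of_mem _ hI.1
    have e1 : a = n + 1 - J := congrArg Prod.fst heq
    have e2 : n + 1 - i = n + 1 - i₂ := congrArg Prod.snd heq
    have e3 : n + 1 - j = n + 1 - j₂ := congrArg Prod.fst heq'
    have e4 : b = n + 1 - I := congrArg Prod.snd heq'
    have ha' : a < n + 1 - j := ha
    have hb' : n + 1 - i < b := hb
    have hi₂ : i₂ = i := by have := hJc.1; have := hJc.2.1; omega
    have hj₂ : j₂ = j := by have := hIc.2.2.1; have := hIc.2.2.2.1; omega
    have hJgt : j < J := by have := hJc.2.2.2.1; omega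
    have hIlt : I < i := by have := hIc.1; omega
    subst hi₂
    subst hj₂
    exact ⟨hc, ⟨I, hIlt, hI⟩, ⟨J, hJgt, hJ⟩⟩
  · rintro ⟨-, ⟨I, hI, hu⟩, ⟨J, hJ, hl⟩⟩
    have hIc : IsCell n (I, j) := T.isCell_of_mem _ hu.1
    have hJc : IsCell n (i, J) := T.isCell_of_mem _ hl.1
    refine ⟨conj_isCell hc, ⟨n + 1 - J, ?_, ?_⟩, ⟨n + 1 - I, ?_, ?_⟩⟩
    · show n + 1 - J < n + 1 - j
      have := hJc.2.2.2.1
      omega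
    · exact isUpArrow_conj hl
    · show n + 1 - i < n + 1 - I
      have := hIc.1
      omega
    · exact isLeftArrow_conj hu

end Arrows

section Involution

variable {n : ℕ}

lemma conjCells_conjFB (T : FB n) : conjCells n (conjFB n T) = T.cells := by
  ext d
  constructor
  · intro hd
    obtain ⟨c, hcs, rfl, hq⟩ := mem_conjCells.1 hd
    have hes : IsCell n (conj n c) := conj_isCell hcs
    have hce : c = conj n (conj n c) := (conj_conj hcs).symm
    rw [hce] at hq
    have hmem : conj n (conj n c) ∈ conjCells n T ↔ Q T (conj n c) :=
      mem_conjCells_conj hes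
    have hfree : IsFree (conjFB n T) (conj n (conj n c)) ↔ IsFree T (conj n c) :=
      isFree_conj hes
    have hbord : IsBorder n (conj n (conj n c)) ↔ IsBorder n (conj n c) :=
      isBorder_conj_iff hes
    unfold Q at hq
    rw [conjFB_cells] at hq
    rw [hmem, hfree, hbord] at hq
    unfold Q at hq
    tauto
  · intro hd
    have hds : IsCell n d := T.isCell_of_mem _ hd
    refine mem_conjCells.2 ⟨conj n d, conj_isCell hds, (conj_conj hds).symm, ?_⟩
    have hmem : conj n d ∈ conjCells n T ↔ Q T d := mem_conjCells_conj hds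
    have hfree : IsFree (conjFB n T) (conj n d) ↔ IsFree T d := isFree_conj hds
    have hbord : IsBorder n (conj n d) ↔ IsBorder n d := isBorder_conj_iff hds
    unfold Q at hmem ⊢
    rw [conjFB_cells]
    tauto

end Involution

section Spaces

variable {n : ℕ}

lemma upArrow_mem_colSp {T : FB n} {c : Cell} (h : IsUpArrow T c) : c ∈ ColSp T :=
  ⟨T.isCell_of_mem _ h.1, c.1, le_refl _, Or.inr h⟩

lemma leftArrow_mem_rowSp {T : FB n} {c : Cell} (h : IsLeftArrow T c) : c ∈ RowSp T :=
  ⟨T.isCell_of_mem _ h.1, c.2, le_refl _, Or.inr h⟩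

lemma colSp_subset_iff {S T : FB n} :
    ColSp S ⊆ ColSp T ↔ ∀ c, IsUpArrow S c → c ∈ ColSp T := by
  constructor
  · exact fun h c hc => h (upArrow_mem_colSp hc)
  · rintro h c ⟨hcell, i', hi', hroot | harr⟩
    · exact ⟨hcell, i', hi', Or.inl hroot⟩
    · obtain ⟨hcell2, i'', hi'', hh⟩ := h _ harr
      exact ⟨hcell, i'', le_trans hi'' hi', hh⟩

lemma rowSp_subset_iff {S T : FB n} :
    RowSp S ⊆ RowSp T ↔ ∀ c, IsLeftArrow S c → c ∈ RowSp T := by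
  constructor
  · exact fun h c hc => h (leftArrow_mem_rowSp hc)
  · rintro h c ⟨hcell, j', hj', hroot | harr⟩
    · exact ⟨hcell, j', hj', Or.inl hroot⟩
    · obtain ⟨hcell2, j'', hj'', hh⟩ := h _ harr
      exact ⟨hcell, j'', le_trans hj' hj'', hh⟩

lemma lhd_conjFB {S T : FB n} (h : Lhd S T) : Lhd (conjFB n T) (conjFB n S) := by
  obtain ⟨h1, h2, h3⟩ := h
  refine ⟨?_, ?_, ?_⟩
  · rw [colSp_subset_iff]
    intro d hd
    obtain ⟨⟨i, J⟩, hJ, rfl⟩ := upArrow_conjFB_eq hd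
    have hJc : IsCell n (i, J) := T.isCell_of_mem _ hJ.1
    have hi2 : 2 ≤ i := by
      have h1' : 1 ≤ i := hJc.1
      by_contra h'
      have he1 : i = 1 := by omega
      subst he1
      exact not_leftArrow_row_one hJ
    have hrow := h2 (leftArrow_mem_rowSp hJ)
    obtain ⟨-, J', hJ', hroot | harr⟩ := hrow
    · exfalso
      have : i = 1 := congrArg Prod.fst hroot
      omega
    · have hJ'2 : J ≤ J' := hJ'
      have hJ'c : IsCell n (i, J') := S.isCell_of_mem _ harr.1
      refine ⟨conj_isCell hJc, n + 1 - J', ?_, Or.inr ?_⟩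
      · show n + 1 - J' ≤ n + 1 - J
        omega
      · exact isUpArrow_conj harr
  · rw [rowSp_subset_iff]
    intro d hd
    obtain ⟨⟨I, j⟩, hI, rfl⟩ := leftArrow_conjFB_eq hd
    have hIc : IsCell n (I, j) := S.isCell_of_mem _ hI.1
    have hjn : j < n := by
      have h1' : j ≤ n := hIc.2.2.2.1
      rcases lt_or_eq_of_le h1' with h' | h'
      · exact h'
      · subst h'
        exact absurd hI not_upArrow_col_n
    have hcol := h1 (upArrow_mem_colSp hI)
    obtain ⟨-, I', hI', hroot | harr⟩ := hcol
    · exfalso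
      have : j = n := congrArg Prod.snd hroot
      omega
    · have hI'2 : I' ≤ I := hI'
      have hI'c : IsCell n (I', j) := T.isCell_of_mem _ harr.1
      refine ⟨conj_isCell hIc, n + 1 - I', ?_, Or.inr ?_⟩
      · show n + 1 - I ≤ n + 1 - I'
        omega
      · exact isLeftArrow_conj harr
  · intro c hcT' hcS' hcmem
    have hcs : IsCell n c := hcT'.1
    have hes : IsCell n (conj n c) := conj_isCell hcs
    have hce : c = conj n (conj n c) := (conj_conj hcs).symm
    rw [hce] at hcT' hcS' hcmem ⊢
    rw [isFree_conj hes] at hcT' hcS'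
    rw [conjFB_cells, mem_conjCells_conj hes] at hcmem
    rw [conjFB_cells, mem_conjCells_conj hes]
    by_cases hb : IsBorder n (conj n c)
    · exact Or.inl ⟨S.border_mem _ hb, fun h => h.2 hb⟩
    · rcases hcmem with ⟨hm, hnot⟩ | ⟨hnm, -⟩
      · exact absurd ⟨hcT', hb⟩ hnot
      · exact Or.inr ⟨fun hmS => hnm (h3 _ hcS' hcT' hmS), hcS', hb⟩

end Spaces

/-- the conjugate of an fb-tableau is an fb-tableau, conjugation is an
involution, and `S ⊲ T ↔ T' ⊲ S'`; in particular `esTam n` is self-dual. -/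
theorem conj_involution_selfdual (n : ℕ) (hn : 1 ≤ n) :
    (∀ T : FB n, ∃ T' : FB n, T'.cells = conjCells n T) ∧
    (∀ T T' : FB n, T'.cells = conjCells n T → conjCells n T' = T.cells) ∧
    (∀ S T S' T' : FB n, S'.cells = conjCells n S → T'.cells = conjCells n T →
      (Lhd S T ↔ Lhd T' S')) := by
  refine ⟨fun T => ⟨conjFB n T, rfl⟩, ?_, ?_⟩
  · intro T T' h
    have hT : T' = conjFB n T := FB.ext' h
    rw [hT]
    exact conjCells_conjFB T
  · intro S T S' T' hS hT
    have hS' : S' = conjFB n S := FB.ext' hS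
    have hT' : T' = conjFB n T := FB.ext' hT
    subst hS'
    subst hT'
    constructor
    · exact lhd_conjFB
    · intro h
      have h2 := lhd_conjFB h
      have eS : conjFB n (conjFB n S) = S := FB.ext' (conjCells_conjFB S)
      have eT : conjFB n (conjFB n T) = T := FB.ext' (conjCells_conjFB T)
      rwa [eS, eT] at h2

end EsTam
end

section
/- The induced subposet of (esTam_n, ⊲) on the set of binary fb-tableaux of size n is order-isomorphic to the poset of bracket vectors of length n−1 ordered componentwise (that is, to the Tamari lattice). -/
open scoped Classical

namespace EsTam

/-- `a` is a bracket vector of length `n - 1` (encoded as a function `ℕ → ℕ`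
vanishing outside `{1, …, n-1}`; in particular the convention `a n = 0` holds):
`0 ≤ a i ≤ n - i` for `1 ≤ i ≤ n - 1`, and `j + a (i + j) ≤ a i` for all
`1 ≤ j ≤ a i`. -/
def IsBracket (n : ℕ) (a : ℕ → ℕ) : Prop :=
  (∀ i, (i = 0 ∨ n - 1 < i) → a i = 0) ∧
  (∀ i, 1 ≤ i → i ≤ n - 1 → a i ≤ n - i) ∧
  (∀ i j, 1 ≤ i → i ≤ n - 1 → 1 ≤ j → j ≤ a i → j + a (i + j) ≤ a i)

variable {n : ℕ}

lemma border_mem' (T : FB n) {i : ℕ} (h2 : 2 ≤ i) (hn : i ≤ n) :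
    ((i, i - 1) : Cell) ∈ T.cells := T.border_mem _ ⟨h2, hn, rfl⟩

noncomputable def mu (T : FB n) (j : ℕ) : ℕ := sInf {i | ((i, j) : Cell) ∈ T.cells}

noncomputable def lam (T : FB n) (i : ℕ) : ℕ := sSup {j | ((i, j) : Cell) ∈ T.cells}

lemma col_nonempty (T : FB n) {j : ℕ} (h1 : 1 ≤ j) (h2 : j ≤ n - 1) :
    {i | ((i, j) : Cell) ∈ T.cells}.Nonempty := by
  refine ⟨j + 1, ?_⟩
  have : ((j + 1, (j+1) - 1) : Cell) ∈ T.cells := border_mem' T (by omega) (by omega)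
  simpa using this

lemma mu_mem (T : FB n) {j : ℕ} (h1 : 1 ≤ j) (h2 : j ≤ n - 1) :
    ((mu T j, j) : Cell) ∈ T.cells := Nat.sInf_mem (col_nonempty T h1 h2)

lemma mu_le (T : FB n) {i j : ℕ} (h : ((i, j) : Cell) ∈ T.cells) : mu T j ≤ i :=
  Nat.sInf_le h

lemma mu_pos (T : FB n) {j : ℕ} (h1 : 1 ≤ j) (h2 : j ≤ n - 1) : 1 ≤ mu T j :=
  (T.isCell_of_mem _ (mu_mem T h1 h2)).1

lemma mu_le_succ (T : FB n) {j : ℕ} (h1 : 1 ≤ j) (h2 : j ≤ n - 1) : mu T j ≤ j + 1 :=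
  mu_le T (by simpa using border_mem' T (i := j + 1) (by omega) (by omega))

lemma isUpArrow_mu (T : FB n) {j : ℕ} (h1 : 1 ≤ j) (h2 : j ≤ n - 1) :
    IsUpArrow T (mu T j, j) := by
  refine ⟨mu_mem T h1 h2, ?_, fun i' hi' => Nat.notMem_of_lt_sInf hi'⟩
  intro h
  rw [root, Prod.mk.injEq] at h
  omega

lemma upArrow_eq_mu (T : FB n) {i j : ℕ} (h : IsUpArrow T (i, j)) : i = mu T j := by
  have h1 : mu T j ≤ i := mu_le T h.1
  rcases eq_or_lt_of_le h1 with he | hl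
  · exact he.symm
  · exact absurd (Nat.sInf_mem (⟨i, h.1⟩ : {i' | ((i', j) : Cell) ∈ T.cells}.Nonempty))
      (h.2.2 _ hl)

lemma upArrow_col (T : FB n) {i j : ℕ} (h : IsUpArrow T (i, j)) :
    1 ≤ j ∧ j ≤ n - 1 := by
  have hc := T.isCell_of_mem _ h.1
  have h1 : 1 ≤ j := hc.2.2.1
  have h2 : j ≤ n := hc.2.2.2.1
  refine ⟨h1, ?_⟩
  rcases eq_or_lt_of_le h2 with he | hl
  · subst he
    -- column n : no up-arrow
    exfalso
    have hi1 : 1 ≤ i := hc.1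
    rcases eq_or_lt_of_le hi1 with he1 | hl1
    · exact h.2.1 (by simp [root, ← he1])
    · exact h.2.2 1 hl1 T.root_mem
  · omega

lemma row_bdd (T : FB n) (i : ℕ) : BddAbove {j | ((i, j) : Cell) ∈ T.cells} :=
  ⟨n, fun j hj => (T.isCell_of_mem _ hj).2.2.2.1⟩

lemma row_nonempty (T : FB n) {i : ℕ} (h2 : 2 ≤ i) (hn : i ≤ n) :
    {j | ((i, j) : Cell) ∈ T.cells}.Nonempty := ⟨i - 1, border_mem' T h2 hn⟩

lemma lam_mem (T : FB n) {i : ℕ} (h2 : 2 ≤ i) (hn : i ≤ n) :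
    ((i, lam T i) : Cell) ∈ T.cells := Nat.sSup_mem (row_nonempty T h2 hn) (row_bdd T i)

lemma le_lam (T : FB n) {i j : ℕ} (h : ((i, j) : Cell) ∈ T.cells) : j ≤ lam T i :=
  le_csSup (row_bdd T i) h

lemma lam_ge (T : FB n) {i : ℕ} (h2 : 2 ≤ i) (hn : i ≤ n) : i - 1 ≤ lam T i :=
  le_lam T (border_mem' T h2 hn)

lemma lam_le_n (T : FB n) {i : ℕ} (h2 : 2 ≤ i) (hn : i ≤ n) : lam T i ≤ n :=
  (T.isCell_of_mem _ (lam_mem T h2 hn)).2.2.2.1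

lemma isLeftArrow_lam (T : FB n) {i : ℕ} (h2 : 2 ≤ i) (hn : i ≤ n) :
    IsLeftArrow T (i, lam T i) := by
  refine ⟨lam_mem T h2 hn, ?_, ?_⟩
  · intro h
    rw [root, Prod.mk.injEq] at h
    omega
  · intro j' hj' hmem
    have hj'' : lam T i < j' := hj'
    have : j' ≤ lam T i := le_lam T (i := i) hmem
    omega

lemma leftArrow_eq_lam (T : FB n) {i j : ℕ} (h : IsLeftArrow T (i, j)) : j = lam T i := by
  have h1 : j ≤ lam T i := le_lam T h.1
  rcases eq_or_lt_of_le h1 with he | hl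
  · exact he
  · exact absurd (Nat.sSup_mem ⟨j, h.1⟩ (row_bdd T i)) (h.2.2 _ hl)

lemma leftArrow_row (T : FB n) {i j : ℕ} (h : IsLeftArrow T (i, j)) :
    2 ≤ i ∧ i ≤ n := by
  have hc := T.isCell_of_mem _ h.1
  have h1 : 1 ≤ i := hc.1
  refine ⟨?_, hc.2.1⟩
  rcases eq_or_lt_of_le h1 with he1 | hl1
  · exfalso
    subst he1
    have hjn : j ≤ n := hc.2.2.2.1
    rcases eq_or_lt_of_le hjn with he | hl
    · exact h.2.1 (by simp [root, he])
    · exact h.2.2 n hl T.root_mem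
  · exact hl1



variable {n : ℕ}

/-- L1 (♦): key monotonicity of up-arrow rows in a binary tableau. -/
lemma mu_key {T : FB n} (hb : IsBinary T) {q p : ℕ} (hq1 : 1 ≤ q) (hqp : q < p)
    (hp : p ≤ n - 1) (h : mu T p ≤ q + 1) : mu T p ≤ mu T q := by
  by_contra hcon
  push_neg at hcon
  have hq2 : q ≤ n - 1 := by omega
  have hp1 : 1 ≤ p := by omega
  have hmuq1 : 1 ≤ mu T q := mu_pos T hq1 hq2
  have hmup2 : 2 ≤ mu T p := by omega
  have hmupn : mu T p ≤ n := by
    have := mu_le_succ T hp1 hp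
    omega
  have hlam : p ≤ lam T (mu T p) := le_lam T (mu_mem T hp1 hp)
  refine hb (mu T p, q) ⟨⟨by omega, by omega, by omega, by omega, Or.inr (by omega)⟩,
    ⟨mu T q, hcon, isUpArrow_mu T hq1 hq2⟩,
    ⟨lam T (mu T p), by omega, isLeftArrow_lam T hmup2 hmupn⟩⟩

/-- L2a: cells strictly left-of-the-left-arrow have up-arrow weakly below row `i`. -/
lemma mu_ge_of_lt_lam {T : FB n} (hb : IsBinary T) {i j : ℕ} (hi2 : 2 ≤ i) (hin : i ≤ n)
    (hj1 : i - 1 ≤ j) (hjl : j < lam T i) (hjn : j ≤ n - 1) : i ≤ mu T j := by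
  by_contra hcon
  push_neg at hcon
  exact hb (i, j) ⟨⟨by omega, hin, by omega, by omega, Or.inr hj1⟩,
    ⟨mu T j, hcon, isUpArrow_mu T (by omega) hjn⟩,
    ⟨lam T i, hjl, isLeftArrow_lam T hi2 hin⟩⟩

/-- L2b: the left-arrow column is `n` or has an up-arrow strictly above row `i`. -/
lemma lam_spec (T : FB n) {i : ℕ} (hi2 : 2 ≤ i) (hin : i ≤ n) :
    lam T i = n ∨ (lam T i ≤ n - 1 ∧ mu T (lam T i) < i) := by
  have hln : lam T i ≤ n := lam_le_n T hi2 hin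
  rcases eq_or_lt_of_le hln with he | hl
  · exact Or.inl he
  · refine Or.inr ⟨by omega, ?_⟩
    have hla := isLeftArrow_lam T hi2 hin
    rcases T.supported _ (lam_mem T hi2 hin) hla.2.1 with ⟨j', hj', hmem⟩ | ⟨i', hi', hmem⟩
    · exact absurd hmem (hla.2.2 j' hj')
    · have : mu T (lam T i) ≤ i' := mu_le T hmem
      omega

/-- L3: a binary tableau is small; every cell is the root or an arrow. -/
lemma binary_cases {T : FB n} (hb : IsBinary T) {c : Cell} (h : c ∈ T.cells) :
    c = root n ∨ (1 ≤ c.2 ∧ c.2 ≤ n - 1 ∧ c.1 = mu T c.2) ∨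
      (2 ≤ c.1 ∧ c.1 ≤ n ∧ c.2 = lam T c.1) := by
  obtain ⟨i, j⟩ := c
  obtain ⟨hi1, hin, hj1, hjn, h5⟩ : 1 ≤ i ∧ i ≤ n ∧ 1 ≤ j ∧ j ≤ n ∧ (i ≤ 2 ∨ i - 1 ≤ j) :=
    T.isCell_of_mem _ h
  show (i, j) = root n ∨ (1 ≤ j ∧ j ≤ n - 1 ∧ i = mu T j) ∨ (2 ≤ i ∧ i ≤ n ∧ j = lam T i)
  rcases eq_or_lt_of_le hi1 with he1 | hi2
  · -- row 1
    rcases eq_or_lt_of_le hjn with he | hl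
    · exact Or.inl (by simp [root, ← he1, he])
    · refine Or.inr (Or.inl ⟨hj1, by omega, ?_⟩)
      have h1 : mu T j ≤ i := mu_le T (i := i) (j := j) h
      have h2 : 1 ≤ mu T j := mu_pos T hj1 (by omega)
      omega
  · -- row ≥ 2
    have hjl : j ≤ lam T i := le_lam T (i := i) (j := j) h
    rcases eq_or_lt_of_le hjl with he | hl
    · exact Or.inr (Or.inr ⟨hi2, hin, he⟩)
    · have hjn' : j ≤ n - 1 := by
        have := lam_le_n T hi2 hin
        omega
      have h1 : mu T j ≤ i := mu_le T (i := i) (j := j) h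
      rcases eq_or_lt_of_le h1 with he' | hl'
      · exact Or.inr (Or.inl ⟨hj1, hjn', he'.symm⟩)
      · exfalso
        exact hb (i, j) ⟨⟨by omega, hin, hj1, hjn, Or.inr (by omega)⟩,
          ⟨mu T j, hl', isUpArrow_mu T hj1 hjn'⟩,
          ⟨lam T i, hl, isLeftArrow_lam T hi2 hin⟩⟩



variable {n : ℕ}

/-- The bracket vector of a tableau, read off from the up-arrow rows. -/
noncomputable def bvec (T : FB n) : ℕ → ℕ :=
  fun k => if 1 ≤ k ∧ k ≤ n - 1 then n + 1 - k - mu T (n - k) else 0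

lemma bvec_isBracket {T : FB n} (hb : IsBinary T) : IsBracket n (bvec T) := by
  refine ⟨fun i hi => by simp only [bvec]; rw [if_neg (by omega)], ?_, ?_⟩
  · intro i h1 h2
    have hm := mu_pos T (j := n - i) (by omega) (by omega)
    simp only [bvec]
    rw [if_pos ⟨h1, h2⟩]
    omega
  · intro k m hk1 hk2 hm1 hm2
    have hnk1 : 1 ≤ n - k := by omega
    have hnk2 : n - k ≤ n - 1 := by omega
    have hA1 : 1 ≤ mu T (n - k) := mu_pos T hnk1 hnk2
    have hA2 : mu T (n - k) ≤ (n - k) + 1 := mu_le_succ T hnk1 hnk2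
    simp only [bvec] at hm2 ⊢
    rw [if_pos (⟨hk1, hk2⟩ : 1 ≤ k ∧ k ≤ n - 1)] at hm2 ⊢
    by_cases hkm : k + m ≤ n - 1
    · rw [if_pos (⟨by omega, hkm⟩ : 1 ≤ k + m ∧ k + m ≤ n - 1)]
      have hq1 : 1 ≤ n - k - m := by omega
      have hqp : n - k - m < n - k := by omega
      have hmukey := mu_key hb hq1 hqp hnk2 (by omega)
      have hB1 : 1 ≤ mu T (n - k - m) := mu_pos T hq1 (by omega)
      have hB2 : mu T (n - k - m) ≤ (n - k - m) + 1 := mu_le_succ T hq1 (by omega)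
      have hnkm : n - (k + m) = n - k - m := by omega
      rw [hnkm]
      omega
    · rw [if_neg (show ¬ (1 ≤ k + m ∧ k + m ≤ n - 1) by omega)]
      omega

lemma mu_eq_of_bvec_eq {S T : FB n} (h : bvec S = bvec T) {j : ℕ}
    (h1 : 1 ≤ j) (h2 : j ≤ n - 1) : mu S j = mu T j := by
  have hk := congrFun h (n - j)
  simp only [bvec] at hk
  have hcond : 1 ≤ n - j ∧ n - j ≤ n - 1 := ⟨by omega, by omega⟩
  rw [if_pos hcond, if_pos hcond] at hk
  have he : n - (n - j) = j := by omega
  rw [he] at hk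
  have b1 := mu_pos S h1 h2
  have b2 := mu_pos T h1 h2
  have b3 := mu_le_succ S h1 h2
  have b4 := mu_le_succ T h1 h2
  omega

lemma lam_le_lam {S T : FB n} (hbT : IsBinary T)
    (hmu : ∀ j, 1 ≤ j → j ≤ n - 1 → mu T j ≤ mu S j) {i : ℕ}
    (hi2 : 2 ≤ i) (hin : i ≤ n) : lam T i ≤ lam S i := by
  by_contra hcon
  push_neg at hcon
  have hlTn : lam T i ≤ n := lam_le_n T hi2 hin
  have hlS1 : i - 1 ≤ lam S i := lam_ge S hi2 hin
  rcases lam_spec S hi2 hin with he | ⟨hn1, hmuS⟩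
  · omega
  · have h1 : mu T (lam S i) ≤ mu S (lam S i) := hmu _ (by omega) hn1
    have h2 : i ≤ mu T (lam S i) := mu_ge_of_lt_lam hbT hi2 hin hlS1 hcon hn1
    omega

lemma binary_cells_subset {S T : FB n} (hbS : IsBinary S)
    (hmu : ∀ j, 1 ≤ j → j ≤ n - 1 → mu S j = mu T j)
    (hlam : ∀ i, 2 ≤ i → i ≤ n → lam S i = lam T i) : S.cells ⊆ T.cells := by
  intro c hc
  rcases binary_cases hbS hc with h | ⟨h1, h2, h3⟩ | ⟨h1, h2, h3⟩
  · rw [h]; exact T.root_mem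
  · have he : c = (mu T c.2, c.2) := by rw [← hmu c.2 h1 h2, ← h3]
    rw [he]; exact mu_mem T h1 h2
  · have he : c = (c.1, lam T c.1) := by rw [← hlam c.1 h1 h2, ← h3]
    rw [he]; exact lam_mem T h1 h2

lemma binary_inj {S T : FB n} (hbS : IsBinary S) (hbT : IsBinary T)
    (h : bvec S = bvec T) : S = T := by
  have hmu : ∀ j, 1 ≤ j → j ≤ n - 1 → mu S j = mu T j :=
    fun j h1 h2 => mu_eq_of_bvec_eq h h1 h2
  have hlam : ∀ i, 2 ≤ i → i ≤ n → lam S i = lam T i := fun i a b =>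
    le_antisymm (lam_le_lam hbS (fun j c d => (hmu j c d).le) a b)
      (lam_le_lam hbT (fun j c d => (hmu j c d).ge) a b)
  exact FB.ext' (Set.Subset.antisymm
    (binary_cells_subset hbS hmu hlam)
    (binary_cells_subset hbT (fun j a b => (hmu j a b).symm)
      (fun i a b => (hlam i a b).symm)))

/-! ### Building a binary tableau from a bracket vector -/

def bmu (n : ℕ) (a : ℕ → ℕ) (j : ℕ) : ℕ := j + 1 - a (n - j)

noncomputable def blam (n : ℕ) (a : ℕ → ℕ) (i : ℕ) : ℕ :=
  sInf {j | j = n ∨ (i - 1 ≤ j ∧ 1 ≤ j ∧ j ≤ n - 1 ∧ bmu n a j < i)}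

def bcells (n : ℕ) (a : ℕ → ℕ) : Set Cell :=
  {c | c = root n ∨ (1 ≤ c.2 ∧ c.2 ≤ n - 1 ∧ c.1 = bmu n a c.2) ∨
    (2 ≤ c.1 ∧ c.1 ≤ n ∧ c.2 = blam n a c.1)}

variable {a : ℕ → ℕ}

lemma bmu_bounds (ha : IsBracket n a) {j : ℕ} (h1 : 1 ≤ j) (h2 : j ≤ n - 1) :
    1 ≤ bmu n a j ∧ bmu n a j ≤ j + 1 := by
  have := ha.2.1 (n - j) (by omega) (by omega)
  unfold bmu
  omega

lemma bmu_key (ha : IsBracket n a) {q p : ℕ} (hq1 : 1 ≤ q) (hqp : q < p)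
    (hp : p ≤ n - 1) (h : bmu n a p ≤ q + 1) : bmu n a p ≤ bmu n a q := by
  have hA : a (n - p) ≤ n - (n - p) := ha.2.1 (n - p) (by omega) (by omega)
  have hB : a (n - q) ≤ n - (n - q) := ha.2.1 (n - q) (by omega) (by omega)
  have hm2 : p - q ≤ a (n - p) := by unfold bmu at h; omega
  have hbr := ha.2.2 (n - p) (p - q) (by omega) (by omega) (by omega) hm2
  have he : n - p + (p - q) = n - q := by omega
  rw [he] at hbr
  unfold bmu
  omega

lemma blam_mem (n : ℕ) (a : ℕ → ℕ) (i : ℕ) :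
    blam n a i = n ∨ (i - 1 ≤ blam n a i ∧ 1 ≤ blam n a i ∧ blam n a i ≤ n - 1 ∧
      bmu n a (blam n a i) < i) :=
  Nat.sInf_mem (⟨n, Or.inl rfl⟩ :
    {j | j = n ∨ (i - 1 ≤ j ∧ 1 ≤ j ∧ j ≤ n - 1 ∧ bmu n a j < i)}.Nonempty)

lemma blam_le_n (n : ℕ) (a : ℕ → ℕ) (i : ℕ) : blam n a i ≤ n :=
  Nat.sInf_le (Or.inl rfl)

lemma blam_ge {i : ℕ} (hin : i ≤ n) : i - 1 ≤ blam n a i := by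
  rcases blam_mem n a i with h | h
  · omega
  · exact h.1

lemma bmu_mem_bcells {j : ℕ} (h1 : 1 ≤ j) (h2 : j ≤ n - 1) :
    ((bmu n a j, j) : Cell) ∈ bcells n a := Or.inr (Or.inl ⟨h1, h2, rfl⟩)

lemma blam_mem_bcells {i : ℕ} (h1 : 2 ≤ i) (h2 : i ≤ n) :
    ((i, blam n a i) : Cell) ∈ bcells n a := Or.inr (Or.inr ⟨h1, h2, rfl⟩)

lemma lt_blam_bmu (ha : IsBracket n a) {j : ℕ} (h1 : 1 ≤ j) (h2 : j ≤ n - 1) :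
    j < blam n a (bmu n a j) := by
  rcases blam_mem n a (bmu n a j) with h | ⟨hb1, hb2, hb3, hb4⟩
  · omega
  · by_contra hcon
    push_neg at hcon
    rcases eq_or_lt_of_le hcon with he | hl
    · rw [he] at hb4; omega
    · have := bmu_key ha hb2 hl h2 (by omega)
      omega

lemma bcells_col (ha : IsBracket n a) (hn : 1 ≤ n) {i j : ℕ}
    (h : ((i, j) : Cell) ∈ bcells n a) (h2 : j ≤ n - 1) : bmu n a j ≤ i := by
  rcases h with h | ⟨_, _, h3⟩ | ⟨_, _, h3⟩
  · exfalso
    rw [root, Prod.mk.injEq] at h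
    omega
  · have h3' : i = bmu n a j := h3
    omega
  · have h3' : j = blam n a i := h3
    rcases blam_mem n a i with he | ⟨_, _, _, hb4⟩
    · omega
    · rw [← h3'] at hb4
      omega

lemma bcells_row (ha : IsBracket n a) (hn : 1 ≤ n) {i j : ℕ}
    (h : ((i, j) : Cell) ∈ bcells n a) (hi2 : 2 ≤ i) : j ≤ blam n a i := by
  rcases h with h | ⟨h1, h2, h3⟩ | ⟨_, _, h3⟩
  · exfalso
    rw [root, Prod.mk.injEq] at h
    omega
  · have h1' : 1 ≤ j := h1
    have h2' : j ≤ n - 1 := h2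
    have h3' : i = bmu n a j := h3
    by_contra hcon
    push_neg at hcon
    rcases blam_mem n a i with he | ⟨hb1, hb2, hb3, hb4⟩
    · omega
    · rcases eq_or_lt_of_le (le_of_lt hcon) with he' | hl'
      · omega
      · have := bmu_key ha hb2 hl' h2' (by omega)
        omega
  · exact le_of_eq h3

noncomputable def build (n : ℕ) (a : ℕ → ℕ) (ha : IsBracket n a) (hn : 1 ≤ n) : FB n where
  cells := bcells n a
  isCell_of_mem := by
    rintro ⟨i, j⟩ hmem
    show 1 ≤ i ∧ i ≤ n ∧ 1 ≤ j ∧ j ≤ n ∧ (i ≤ 2 ∨ i - 1 ≤ j)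
    rcases hmem with h | ⟨h1, h2, h3⟩ | ⟨h1, h2, h3⟩
    · obtain ⟨hi, hj⟩ : i = 1 ∧ j = n := by rwa [root, Prod.mk.injEq] at h
      exact ⟨by omega, by omega, by omega, by omega, Or.inl (by omega)⟩
    · have h1' : 1 ≤ j := h1
      have h2' : j ≤ n - 1 := h2
      have h3' : i = bmu n a j := h3
      have hb := bmu_bounds ha h1' h2'
      exact ⟨by omega, by omega, by omega, by omega, Or.inr (by omega)⟩
    · have h1' : 2 ≤ i := h1
      have h2' : i ≤ n := h2
      have h3' : j = blam n a i := h3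
      have hb1 := blam_le_n n a i
      have hb2 := blam_ge (a := a) h2'
      exact ⟨by omega, by omega, by omega, by omega, Or.inr (by omega)⟩
  root_mem := Or.inl rfl
  border_mem := by
    rintro ⟨i, j⟩ ⟨h1, h2, h3⟩
    have h1' : 2 ≤ i := h1
    have h2' : i ≤ n := h2
    have h3' : j = i - 1 := h3
    subst h3'
    show ((i, i - 1) : Cell) = root n ∨ (1 ≤ i - 1 ∧ i - 1 ≤ n - 1 ∧ i = bmu n a (i - 1)) ∨
      (2 ≤ i ∧ i ≤ n ∧ i - 1 = blam n a i)
    rcases eq_or_lt_of_le (blam_ge (a := a) h2' : i - 1 ≤ blam n a i) with he | hl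
    · exact Or.inr (Or.inr ⟨h1', h2', he⟩)
    · have h5 : ¬ bmu n a (i - 1) < i := by
        intro hlt
        have : blam n a i ≤ i - 1 :=
          Nat.sInf_le (Or.inr ⟨le_refl _, by omega, by omega, hlt⟩)
        omega
      have hbb := bmu_bounds ha (j := i - 1) (by omega) (by omega)
      exact Or.inr (Or.inl ⟨by omega, by omega, by omega⟩)
  supported := by
    rintro ⟨i, j⟩ (h | ⟨h1, h2, h3⟩ | ⟨h1, h2, h3⟩) hne
    · exact absurd h hne
    · have h1' : 1 ≤ j := h1
      have h2' : j ≤ n - 1 := h2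
      have h3' : i = bmu n a j := h3
      have hbb := bmu_bounds ha h1' h2'
      show (∃ j', j < j' ∧ ((i, j') : Cell) ∈ bcells n a) ∨
        (∃ i', i' < i ∧ ((i', j) : Cell) ∈ bcells n a)
      rcases eq_or_lt_of_le hbb.1 with he | hl
      · left
        refine ⟨n, by omega, ?_⟩
        have : i = 1 := by omega
        rw [this]
        exact Or.inl rfl
      · left
        refine ⟨blam n a (bmu n a j), ?_, ?_⟩
        · have := lt_blam_bmu ha h1' h2'
          omega
        · rw [h3']
          exact blam_mem_bcells (by omega) (by omega)
    · have h1' : 2 ≤ i := h1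
      have h2' : i ≤ n := h2
      have h3' : j = blam n a i := h3
      show (∃ j', j < j' ∧ ((i, j') : Cell) ∈ bcells n a) ∨
        (∃ i', i' < i ∧ ((i', j) : Cell) ∈ bcells n a)
      rcases blam_mem n a i with he | ⟨hb1, hb2, hb3, hb4⟩
      · right
        refine ⟨1, by omega, ?_⟩
        rw [show j = n by omega]
        exact Or.inl rfl
      · right
        refine ⟨bmu n a (blam n a i), by omega, ?_⟩
        rw [h3']
        exact bmu_mem_bcells hb2 hb3

lemma build_mu (ha : IsBracket n a) (hn : 1 ≤ n) {j : ℕ} (h1 : 1 ≤ j) (h2 : j ≤ n - 1) :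
    mu (build n a ha hn) j = bmu n a j :=
  le_antisymm (mu_le _ (bmu_mem_bcells h1 h2))
    (bcells_col ha hn (mu_mem (build n a ha hn) h1 h2) h2)

lemma build_lam (ha : IsBracket n a) (hn : 1 ≤ n) {i : ℕ} (h2 : 2 ≤ i) (hin : i ≤ n) :
    lam (build n a ha hn) i = blam n a i :=
  le_antisymm (bcells_row ha hn (lam_mem (build n a ha hn) h2 hin) h2)
    (le_lam _ (blam_mem_bcells h2 hin))

lemma build_binary (ha : IsBracket n a) (hn : 1 ≤ n) : IsBinary (build n a ha hn) := by
  rintro ⟨i, j⟩ ⟨hcell, ⟨i', hi', hup⟩, ⟨j', hj', hleft⟩⟩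
  have hup' : IsUpArrow (build n a ha hn) (i', j) := hup
  have hleft' : IsLeftArrow (build n a ha hn) (i, j') := hleft
  have hi'' : i' < i := hi'
  have hj'' : j < j' := hj'
  have hcol := upArrow_col _ hup'
  have hrow := leftArrow_row _ hleft'
  have he1 : i' = mu (build n a ha hn) j := upArrow_eq_mu _ hup'
  have he2 : j' = lam (build n a ha hn) i := leftArrow_eq_lam _ hleft'
  rw [build_mu ha hn hcol.1 hcol.2] at he1
  rw [build_lam ha hn hrow.1 hrow.2] at he2
  have hshape : i - 1 ≤ j := by
    obtain ⟨a1, a2, a3, a4, a5⟩ : 1 ≤ i ∧ i ≤ n ∧ 1 ≤ j ∧ j ≤ n ∧ (i ≤ 2 ∨ i - 1 ≤ j) := hcell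
    rcases a5 with a5 | a5 <;> omega
  have hblam : blam n a i ≤ j :=
    Nat.sInf_le (Or.inr ⟨hshape, by omega, hcol.2, by omega⟩)
  omega

lemma build_bvec (ha : IsBracket n a) (hn : 1 ≤ n) : bvec (build n a ha hn) = a := by
  funext k
  by_cases hk : 1 ≤ k ∧ k ≤ n - 1
  · have h1 : 1 ≤ n - k := by omega
    have h2 : n - k ≤ n - 1 := by omega
    have hmu := build_mu ha hn h1 h2
    have hak : a k ≤ n - k := ha.2.1 k hk.1 hk.2
    simp only [bvec, if_pos hk, hmu]
    unfold bmu
    rw [show n - (n - k) = k by omega]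
    omega
  · simp only [bvec, if_neg hk]
    exact (ha.1 k (by omega)).symm

/-! ### Order comparison -/

lemma mu_antitone {S T : FB n} (h : Lhd S T) {j : ℕ} (h1 : 1 ≤ j) (h2 : j ≤ n - 1) :
    mu T j ≤ mu S j := by
  have hc : ((mu S j, j) : Cell) ∈ ColSp S :=
    ⟨S.isCell_of_mem _ (mu_mem S h1 h2),
      ⟨mu S j, le_refl _, Or.inr (isUpArrow_mu S h1 h2)⟩⟩
  rcases (h.1 hc).2 with ⟨i', hi', hor⟩
  have hi'' : i' ≤ mu S j := hi'
  rcases hor with he | hup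
  · exfalso
    have he' : ((i', j) : Cell) = root n := he
    rw [root, Prod.mk.injEq] at he'
    omega
  · have hup' : IsUpArrow T (i', j) := hup
    have := upArrow_eq_mu T hup'
    omega

/-- the induced subposet of `(esTam n, ⊲)` on binary fb-tableaux is
order-isomorphic to the poset of bracket vectors of length `n - 1` ordered
componentwise (the Tamari lattice). -/
theorem binary_iso_bracketVectors (n : ℕ) (hn : 1 ≤ n) :
    ∃ F : {T : FB n // IsBinary T} → {a : ℕ → ℕ // IsBracket n a},
      Function.Bijective F ∧
      ∀ S T : {T : FB n // IsBinary T},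
        (Lhd S.1 T.1 ↔ ∀ i, (F S).1 i ≤ (F T).1 i) := by
  refine ⟨fun T => ⟨bvec T.1, bvec_isBracket T.2⟩, ⟨?_, ?_⟩, ?_⟩
  · intro S T h
    exact Subtype.ext (binary_inj S.2 T.2 (congrArg Subtype.val h))
  · rintro ⟨a, ha⟩
    exact ⟨⟨build n a ha hn, build_binary ha hn⟩, Subtype.ext (build_bvec ha hn)⟩
  · intro S T
    constructor
    · intro h k
      by_cases hk : 1 ≤ k ∧ k ≤ n - 1
      · have h1 : 1 ≤ n - k := by omega
        have h2 : n - k ≤ n - 1 := by omega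
        have hmu := mu_antitone h h1 h2
        simp only [bvec, if_pos hk]
        omega
      · simp only [bvec, if_neg hk]
        omega
    · intro h
      have hmu : ∀ j, 1 ≤ j → j ≤ n - 1 → mu T.1 j ≤ mu S.1 j := by
        intro j h1 h2
        have hj := h (n - j)
        have hcond : 1 ≤ n - j ∧ n - j ≤ n - 1 := ⟨by omega, by omega⟩
        simp only [bvec] at hj
        rw [if_pos hcond, if_pos hcond] at hj
        have he : n - (n - j) = j := by omega
        rw [he] at hj
        have b3 := mu_le_succ S.1 h1 h2
        have b4 := mu_le_succ T.1 h1 h2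
        have b1 := mu_pos S.1 h1 h2
        have b2 := mu_pos T.1 h1 h2
        omega
      refine ⟨?_, ?_, fun c hc _ _ => absurd hc (S.2 c)⟩
      · -- ColSp S ⊆ ColSp T
        rintro ⟨x, y⟩ hc
        obtain ⟨hcell, i', hi', hor⟩ : IsCell n (x, y) ∧ ∃ i', i' ≤ x ∧
            (((i', y) : Cell) = root n ∨ IsUpArrow S.1 (i', y)) := hc
        show IsCell n (x, y) ∧ ∃ i', i' ≤ x ∧
            (((i', y) : Cell) = root n ∨ IsUpArrow T.1 (i', y))
        refine ⟨hcell, ?_⟩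
        rcases hor with he | hup
        · exact ⟨i', hi', Or.inl he⟩
        · have hcol := upArrow_col S.1 hup
          have he1 : i' = mu S.1 y := upArrow_eq_mu S.1 hup
          refine ⟨mu T.1 y, ?_, Or.inr (isUpArrow_mu T.1 hcol.1 hcol.2)⟩
          have := hmu y hcol.1 hcol.2
          omega
      · -- RowSp T ⊆ RowSp S
        have hlam : ∀ i, 2 ≤ i → i ≤ n → lam T.1 i ≤ lam S.1 i :=
          fun i a b => lam_le_lam T.2 hmu a b
        rintro ⟨x, y⟩ hc
        obtain ⟨hcell, j', hj', hor⟩ : IsCell n (x, y) ∧ ∃ j', y ≤ j' ∧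
            (((x, j') : Cell) = root n ∨ IsLeftArrow T.1 (x, j')) := hc
        show IsCell n (x, y) ∧ ∃ j', y ≤ j' ∧
            (((x, j') : Cell) = root n ∨ IsLeftArrow S.1 (x, j'))
        refine ⟨hcell, ?_⟩
        rcases hor with he | hla
        · exact ⟨j', hj', Or.inl he⟩
        · have hrow := leftArrow_row T.1 hla
          have he2 : j' = lam T.1 x := leftArrow_eq_lam T.1 hla
          refine ⟨lam S.1 x, ?_, Or.inr (isLeftArrow_lam S.1 hrow.1 hrow.2)⟩
          have := hlam x hrow.1 hrow.2
          omega

end EsTam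
end
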